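/- Let A be an additively idempotent commutative semiring and let p_1 ⊂ p_2 ⊂ ... ⊂ p_k be a strictly increasing chain of prime congruences in the Laurent polynomial semiring A(x), all having the same kernel. Then in the restricted chain p_1|_A ⊆ p_2|_A ⊆ ... ⊆ p_k|_A, equality of consecutive terms occurs at most once. -/

import Mathlib

/-- A prime congruence: proper, and twisted products in P force a factor in P. -/
def IsPrimeCon {A : Type*} [CommSemiring A] (P : RingCon A) : Prop :=
  (∃ a b : A, ¬ P a b) ∧
    ∀ a₁ a₂ b₁ b₂ : A,
      P (a₁ * b₁ + a₂ * b₂) (a₁ * b₂ + a₂ * b₁) → P a₁ a₂ ∨ P b₁ b₂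

section Generic
variable {R : Type*} [CommSemiring R] {P : RingCon R}

lemma prime_cancel (hP : IsPrimeCon P) {a b u : R} (h : P (a * u) (b * u)) (hu : ¬ P u 0) :
    P a b := by
  rcases hP.2 a b u 0 (by simpa using h) with h1 | h1
  · exact h1
  · exact absurd h1 hu

lemma prime_mul_zero (hP : IsPrimeCon P) {a b : R} (h : P (a * b) 0) : P a 0 ∨ P b 0 := by
  rcases hP.2 a 0 b 0 (by simpa using h) with h1 | h1
  · exact Or.inl h1
  · exact Or.inr h1

lemma total_of_improper (h : P 1 0) (x y : R) : P x y := by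
  have hx : P x 0 := by simpa using P.mul (P.refl x) h
  have hy : P y 0 := by simpa using P.mul (P.refl y) h
  exact P.trans hx (P.symm hy)

lemma prime_one_ne (hP : IsPrimeCon P) : ¬ P 1 0 := by
  intro h
  obtain ⟨a, b, hab⟩ := hP.1
  exact hab (total_of_improper h a b)

lemma prime_pow_ne (hP : IsPrimeCon P) {a : R} (ha : ¬ P a 0) (n : ℕ) : ¬ P (a ^ n) 0 := by
  induction n with
  | zero => simpa using prime_one_ne hP
  | succ n ih =>
    intro h
    rw [pow_succ] at h
    rcases prime_mul_zero hP h with h1 | h1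
    · exact ih h1
    · exact ha h1

lemma prime_pow_zero (hP : IsPrimeCon P) {a : R} {n : ℕ} (hn : n ≠ 0) (h : P (a ^ n) 0) :
    P a 0 := by
  induction n with
  | zero => exact absurd rfl hn
  | succ n ih =>
    rw [pow_succ] at h
    rcases prime_mul_zero hP h with h1 | h1
    · rcases Nat.eq_zero_or_pos n with h0 | h0
      · rw [h0, pow_zero] at h1
        exact total_of_improper h1 a 0
      · exact ih h0.ne' h1
    · exact h1

lemma prime_total (hid : ∀ r : R, r + r = r) (hP : IsPrimeCon P) (a b : R) :
    P (a + b) a ∨ P (a + b) b := by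
  refine hP.2 (a + b) a (a + b) b ?_
  have : (a + b) * (a + b) + a * b = (a + b) * b + a * (a + b) := by
    have h1 : (a + b) * (a + b) + a * b = a*a + b*b + (a*b + a*b + a*b) := by ring
    have h2 : (a + b) * b + a * (a + b) = a*a + b*b + (a*b + a*b) := by ring
    rw [h1, h2, hid (a*b), hid (a*b)]
  rw [this]
  exact P.refl _

variable {R : Type*} [CommSemiring R] {P : RingCon R}

/-- `x ≤ y` mod `P`. -/
def leP (P : RingCon R) (x y : R) : Prop := P (x + y) y

lemma leP_trans {x y z : R} (h1 : leP P x y) (h2 : leP P y z) : leP P x z := by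
  have ha : P (x + z) (x + (y + z)) := P.add (P.refl x) (P.symm h2)
  have hb : P (x + (y + z)) (y + z) := by
    have := P.add h1 (P.refl z)
    rwa [add_assoc] at this
  exact P.trans (P.trans ha hb) h2

lemma leP_mul_right {x y : R} (z : R) (h : leP P x y) : leP P (x * z) (y * z) := by
  have := P.mul h (P.refl z)
  rwa [add_mul] at this

lemma leP_mul_left {x y : R} (z : R) (h : leP P x y) : leP P (z * x) (z * y) := by
  have := leP_mul_right (P := P) z h
  rwa [mul_comm x z, mul_comm y z] at this

lemma leP_pow (hid : ∀ r : R, r + r = r) {x y : R} (h : leP P x y) (n : ℕ) :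
    leP P (x ^ n) (y ^ n) := by
  induction n with
  | zero => show P _ _; rw [pow_zero, pow_zero, hid 1]; exact P.refl 1
  | succ n ih =>
    rw [pow_succ, pow_succ]
    exact leP_trans (leP_mul_right x ih) (leP_mul_left (y ^ n) h)

lemma ringcon_zero_pow (hv : P v 0) (m : ℕ) : P (v ^ (m + 1)) 0 := by
  have := P.mul (P.refl (v ^ m)) hv
  rw [mul_zero, ← pow_succ] at this
  exact this

lemma prime_root_aux (hid : ∀ r : R, r + r = r) (hP : IsPrimeCon P) {u v : R} {m : ℕ}
    (h : P (u ^ (m + 1)) (v ^ (m + 1))) (hv : ¬ P v 0) (hle : leP P v u) : P u v := by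
  have h1 : leP P (v ^ (m + 1)) (u * v ^ m) := by
    rw [pow_succ, mul_comm (v ^ m) v]; exact leP_mul_right _ hle
  have h2 : leP P (u * v ^ m) (u ^ (m + 1)) := by
    rw [pow_succ, mul_comm (u ^ m) u]; exact leP_mul_left u (leP_pow hid hle m)
  have t1 : P (u * v ^ m) (v ^ (m + 1) + u * v ^ m) := P.symm h1
  have t2 : P (v ^ (m + 1) + u * v ^ m) (u ^ (m + 1) + u * v ^ m) :=
    P.add (P.symm h) (P.refl _)
  have t3 : P (u ^ (m + 1) + u * v ^ m) (u ^ (m + 1)) := by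
    have h2' : P (u * v ^ m + u ^ (m + 1)) (u ^ (m + 1)) := h2
    rwa [add_comm (u * v ^ m)] at h2'
  have t4 : P (u * v ^ m) (v ^ (m + 1)) :=
    P.trans (P.trans (P.trans t1 t2) t3) h
  rw [pow_succ, mul_comm (v ^ m) v] at t4
  exact prime_cancel hP t4 (prime_pow_ne hP hv m)

lemma prime_root (hid : ∀ r : R, r + r = r) (hP : IsPrimeCon P) {u v : R} {n : ℕ}
    (hn : n ≠ 0) (h : P (u ^ n) (v ^ n)) : P u v := by
  obtain ⟨m, rfl⟩ := Nat.exists_eq_succ_of_ne_zero hn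
  by_cases hv : P v 0
  · have hu0 : P u 0 :=
      prime_pow_zero hP (Nat.succ_ne_zero m) (P.trans h (ringcon_zero_pow hv m))
    exact P.trans hu0 (P.symm hv)
  by_cases hu : P u 0
  · have hv0 : P v 0 :=
      prime_pow_zero hP (Nat.succ_ne_zero m) (P.trans (P.symm h) (ringcon_zero_pow hu m))
    exact absurd hv0 hv
  rcases prime_total hid hP v u with hle | hle
  · have hle' : leP P u v := by rwa [add_comm] at hle
    exact P.symm (prime_root_aux hid hP (P.symm h) hu hle')
  · exact prime_root_aux hid hP h hv hle

lemma ringcon_pow (C : RingCon R) {x y : R} (r : ℕ) (h : C x y) : C (x ^ r) (y ^ r) := by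
  induction r with
  | zero => rw [pow_zero, pow_zero]; exact C.refl 1
  | succ r ih => rw [pow_succ, pow_succ]; exact C.mul ih h

end Generic

section Alg
open AddMonoidAlgebra
variable {A : Type*} [CommSemiring A]

lemma idS (hidem : ∀ a : A, a + a = a) : ∀ f : AddMonoidAlgebra A ℤ, f + f = f := by
  intro f
  refine AddMonoidAlgebra.coeff_inj.mp (Finsupp.ext fun n => ?_)
  show (f + f).coeff n = f.coeff n
  rw [coeff_add, Finsupp.add_apply]
  exact hidem _

variable {P Q : RingCon (AddMonoidAlgebra A ℤ)}

lemma shift_con (C : RingCon (AddMonoidAlgebra A ℤ)) (t : ℤ) {n m : ℤ} {a b : A}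
    (h : C (single n a) (single m b)) :
    C (single (t + n) a) (single (t + m) b) := by
  have := C.mul (C.refl (single t (1 : A))) h
  rwa [single_mul_single, single_mul_single, one_mul, one_mul] at this

lemma single_one_ne_zero (hP : IsPrimeCon P) (t : ℤ) : ¬ P (single t (1 : A)) 0 := by
  intro h
  have h2 := P.mul (P.refl (single (-t) (1 : A))) h
  rw [single_mul_single, mul_zero, neg_add_cancel, one_mul] at h2
  exact prime_one_ne hP (by rwa [one_def])

lemma exists_monomial (hidem : ∀ a : A, a + a = a) (hP : IsPrimeCon P)
    (f : AddMonoidAlgebra A ℤ) : ∃ (n : ℤ) (a : A), P f (single n a) := by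
  induction f using AddMonoidAlgebra.induction with
  | zero => exact ⟨0, 0, by rw [single_zero]; exact P.refl 0⟩
  | single_add n b f _ _ ih =>
    obtain ⟨m, a, hma⟩ := ih
    rcases prime_total (idS hidem) hP (single n b) f with h | h
    · exact ⟨n, b, h⟩
    · exact ⟨m, a, P.trans h hma⟩


lemma key_lemma (hidem : ∀ a : A, a + a = a) (hP : IsPrimeCon P) (hPQ : P < Q)
    (hres : ∀ a b : A, P (single 0 a) (single 0 b) ↔ Q (single 0 a) (single 0 b)) :
    ∃ (a b : A) (e : ℕ), e ≠ 0 ∧ Q (single (e : ℤ) a) (single 0 b) ∧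
      ¬ P (single (e : ℤ) a) (single 0 b) := by
  have hle : ∀ {x y : AddMonoidAlgebra A ℤ}, P x y → Q x y := RingCon.le_def.mp hPQ.le
  obtain ⟨f, g, hQfg, hPfg⟩ : ∃ f g, Q f g ∧ ¬ P f g := by
    by_contra hcon
    push_neg at hcon
    exact hPQ.ne' (le_antisymm (RingCon.le_def.mpr fun {x y} h => hcon x y h) hPQ.le)
  obtain ⟨n, a, hna⟩ := exists_monomial hidem hP f
  obtain ⟨m, b, hmb⟩ := exists_monomial hidem hP g
  have hQ1 : Q (single n a) (single m b) :=
    Q.trans (Q.trans (Q.symm (hle hna)) hQfg) (hle hmb)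
  have hP1 : ¬ P (single n a) (single m b) := fun h =>
    hPfg (P.trans (P.trans hna h) (P.symm hmb))
  rcases lt_trichotomy n m with hnm | hnm | hnm
  · -- n < m : pair (single (m-n) b, single 0 a)
    refine ⟨b, a, (m - n).toNat, by omega, ?_, ?_⟩
    · have := shift_con Q (-n) hQ1
      rw [neg_add_cancel] at this
      have h2 := Q.symm this
      rwa [show ((-n) + m) = (((m - n).toNat : ℤ)) by omega] at h2
    · intro h
      have := shift_con P n (P.symm h)
      rw [add_zero] at this
      rw [show (n + ((m - n).toNat : ℤ)) = m by omega] at this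
      exact hP1 this
  · -- n = m : contradiction with hres
    exfalso
    subst hnm
    have hQ0 : Q (single 0 a) (single 0 b) := by
      have := shift_con Q (-n) hQ1
      rwa [neg_add_cancel] at this
    have hP0 : P (single 0 a) (single 0 b) := (hres a b).mpr hQ0
    have := shift_con P n hP0
    rw [add_zero] at this
    exact hP1 this
  · -- n > m : pair (single (n-m) a, single 0 b)
    refine ⟨a, b, (n - m).toNat, by omega, ?_, ?_⟩
    · have := shift_con Q (-m) hQ1
      rw [neg_add_cancel] at this
      rwa [show ((-m) + n) = (((n - m).toNat : ℤ)) by omega] at this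
    · intro h
      have := shift_con P m h
      rw [add_zero] at this
      rw [show (m + ((n - m).toNat : ℤ)) = n by omega] at this
      exact hP1 this


lemma pow_single_con (C : RingCon (AddMonoidAlgebra A ℤ)) {e : ℕ} {a b : A} (r : ℕ)
    (h : C (single (e : ℤ) a) (single 0 b)) :
    C (single ((e * r : ℕ) : ℤ) (a ^ r)) (single 0 (b ^ r)) := by
  have h2 := ringcon_pow C r h
  rw [single_pow, single_pow, smul_zero] at h2
  rwa [show r • ((e : ℕ) : ℤ) = ((e * r : ℕ) : ℤ) by push_cast [nsmul_eq_mul]; ring] at h2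

lemma mul_single0_con (C : RingCon (AddMonoidAlgebra A ℤ)) {t : ℤ} {x y : A}
    (h : C (single t x) (single 0 y)) (z : A) :
    C (single t (x * z)) (single 0 (y * z)) := by
  have h2 := C.mul h (C.refl (single 0 z))
  rwa [single_mul_single, single_mul_single, add_zero, add_zero] at h2

lemma main_lt (hidem : ∀ a : A, a + a = a) (k : ℕ)
    (c : Fin (k + 1) → RingCon (AddMonoidAlgebra A ℤ))
    (hmono : StrictMono c) (hprime : ∀ i, IsPrimeCon (c i))
    (hker : ∀ i (p : AddMonoidAlgebra A ℤ), c i p 0 ↔ c 0 p 0)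
    (i j : Fin k) (hij : i < j)
    (hi : ∀ a b : A, c i.castSucc (single 0 a) (single 0 b) ↔
      c i.succ (single 0 a) (single 0 b))
    (hj : ∀ a b : A, c j.castSucc (single 0 a) (single 0 b) ↔
      c j.succ (single 0 a) (single 0 b)) : False := by
  have htker : ∀ (s t : Fin (k + 1)) (p : AddMonoidAlgebra A ℤ), c s p 0 → c t p 0 :=
    fun s t p h => (hker t p).mpr ((hker s p).mp h)
  have hPQ : c i.castSucc < c i.succ := hmono (Fin.castSucc_lt_succ (i := i))
  have hP'Q' : c j.castSucc < c j.succ := hmono (Fin.castSucc_lt_succ (i := j))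
  have hQP' : c i.succ ≤ c j.castSucc := by
    refine hmono.monotone ?_
    rw [Fin.le_def, Fin.val_succ, Fin.coe_castSucc]
    exact hij
  have hQP'' : ∀ {x y}, c i.succ x y → c j.castSucc x y := RingCon.le_def.mp hQP'
  have hP'le : ∀ {x y}, c j.castSucc x y → c j.succ x y := RingCon.le_def.mp hP'Q'.le
  obtain ⟨a, b, e, he, hQab, hPab⟩ :=
    key_lemma hidem (hprime i.castSucc) hPQ (fun a b => hi a b)
  obtain ⟨cc, dd, e', he', hQ'cd, hP'cd⟩ :=
    key_lemma hidem (hprime j.castSucc) hP'Q' (fun a b => hj a b)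
  -- b is nonzero modulo everything
  have hb0 : ¬ c j.castSucc (single 0 b) 0 := by
    intro h
    have hQb0 : c i.succ (single 0 b) 0 := htker _ _ _ h
    have hQa0 : c i.succ (single (e : ℤ) a) 0 := (c i.succ).trans hQab hQb0
    have hPa0 : c i.castSucc (single (e : ℤ) a) 0 := htker _ _ _ hQa0
    have hPb0 : c i.castSucc (single 0 b) 0 := htker _ _ _ h
    exact hPab ((c i.castSucc).trans hPa0 ((c i.castSucc).symm hPb0))
  set Q' := c j.succ with hQ'def
  set P' := c j.castSucc with hP'def
  have hab' : P' (single (e : ℤ) a) (single 0 b) := hQP'' hQab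
  have hab'' : Q' (single (e : ℤ) a) (single 0 b) := hP'le hab'
  -- work modulo Q'
  have s1 : Q' (single ((e * e' : ℕ) : ℤ) (a ^ e')) (single 0 (b ^ e')) :=
    pow_single_con Q' e' hab''
  have s2 : Q' (single ((e * e' : ℕ) : ℤ) (cc ^ e)) (single 0 (dd ^ e)) := by
    have := pow_single_con Q' e hQ'cd
    rwa [show e' * e = e * e' from Nat.mul_comm _ _] at this
  have s3 : Q' (single ((e * e' : ℕ) : ℤ) (a ^ e' * dd ^ e)) (single 0 (b ^ e' * dd ^ e)) :=
    mul_single0_con Q' s1 (dd ^ e)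
  have s4 : Q' (single ((e * e' : ℕ) : ℤ) (cc ^ e * b ^ e')) (single 0 (dd ^ e * b ^ e')) :=
    mul_single0_con Q' s2 (b ^ e')
  have s5 : Q' (single ((e * e' : ℕ) : ℤ) (a ^ e' * dd ^ e))
      (single ((e * e' : ℕ) : ℤ) (cc ^ e * b ^ e')) := by
    rw [mul_comm (dd ^ e) (b ^ e')] at s4
    exact Q'.trans s3 (Q'.symm s4)
  have s6 : Q' (single 0 (a ^ e' * dd ^ e)) (single 0 (cc ^ e * b ^ e')) := by
    have := shift_con Q' (-((e * e' : ℕ) : ℤ)) s5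
    rwa [neg_add_cancel] at this
  have s7 : P' (single 0 (a ^ e' * dd ^ e)) (single 0 (cc ^ e * b ^ e')) := (hj _ _).mpr s6
  have s9 : P' (single ((e * e' : ℕ) : ℤ) (a ^ e')) (single 0 (b ^ e')) :=
    pow_single_con P' e' hab'
  have s10 : P' (single ((e * e' : ℕ) : ℤ) (a ^ e' * dd ^ e)) (single 0 (b ^ e' * dd ^ e)) :=
    mul_single0_con P' s9 (dd ^ e)
  have s7' : P' (single ((e * e' : ℕ) : ℤ) (a ^ e' * dd ^ e))
      (single ((e * e' : ℕ) : ℤ) (cc ^ e * b ^ e')) := by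
    have := shift_con P' ((e * e' : ℕ) : ℤ) s7
    rwa [add_zero] at this
  have s11 : P' (single ((e * e' : ℕ) : ℤ) (cc ^ e * b ^ e')) (single 0 (b ^ e' * dd ^ e)) :=
    P'.trans (P'.symm s7') s10
  rw [show single ((e * e' : ℕ) : ℤ) (cc ^ e * b ^ e')
        = single ((e * e' : ℕ) : ℤ) (cc ^ e) * single 0 (b ^ e') by
      rw [single_mul_single, add_zero],
    show single (0 : ℤ) (b ^ e' * dd ^ e) = single (0 : ℤ) (dd ^ e) * single 0 (b ^ e') by
      rw [single_mul_single, add_zero, mul_comm]] at s11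
  have hbp : ¬ P' (single (0 : ℤ) (b ^ e')) 0 := by
    have := prime_pow_ne (hprime j.castSucc) hb0 e'
    rwa [single_pow, smul_zero] at this
  have s13 : P' (single ((e * e' : ℕ) : ℤ) (cc ^ e)) (single 0 (dd ^ e)) :=
    prime_cancel (hprime j.castSucc) s11 hbp
  have s14 : P' ((single ((e' : ℕ) : ℤ) cc) ^ e) ((single (0 : ℤ) dd) ^ e) := by
    rw [single_pow, single_pow, smul_zero,
      show e • ((e' : ℕ) : ℤ) = ((e * e' : ℕ) : ℤ) by push_cast [nsmul_eq_mul]; ring]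
    exact s13
  exact hP'cd (prime_root (idS hidem) (hprime j.castSucc) he s14)
end Alg

/-- In a strictly increasing chain of primes of `A(x)` with common kernel, the
restricted chain to `A` has equality of consecutive terms at most once. -/
theorem stmt_10 (A : Type*) [CommSemiring A] (hidem : ∀ a : A, a + a = a)
    (k : ℕ) (c : Fin (k + 1) → RingCon (AddMonoidAlgebra A ℤ))
    (hmono : StrictMono c) (hprime : ∀ i, IsPrimeCon (c i))
    (hker : ∀ i (p : AddMonoidAlgebra A ℤ), c i p 0 ↔ c 0 p 0) :
    ∀ i j : Fin k,
      (∀ a b : A, c i.castSucc (AddMonoidAlgebra.singleZeroRingHom a)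
          (AddMonoidAlgebra.singleZeroRingHom b) ↔
        c i.succ (AddMonoidAlgebra.singleZeroRingHom a)
          (AddMonoidAlgebra.singleZeroRingHom b)) →
      (∀ a b : A, c j.castSucc (AddMonoidAlgebra.singleZeroRingHom a)
          (AddMonoidAlgebra.singleZeroRingHom b) ↔
        c j.succ (AddMonoidAlgebra.singleZeroRingHom a)
          (AddMonoidAlgebra.singleZeroRingHom b)) →
      i = j := by
  intro i j hi hj
  have conv : ∀ (s : Fin k),
      (∀ a b : A, c s.castSucc (AddMonoidAlgebra.singleZeroRingHom a)
          (AddMonoidAlgebra.singleZeroRingHom b) ↔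
        c s.succ (AddMonoidAlgebra.singleZeroRingHom a)
          (AddMonoidAlgebra.singleZeroRingHom b)) →
      ∀ a b : A, c s.castSucc (AddMonoidAlgebra.single 0 a) (AddMonoidAlgebra.single 0 b) ↔
        c s.succ (AddMonoidAlgebra.single 0 a) (AddMonoidAlgebra.single 0 b) := by
    intro s hs a b
    simpa [AddMonoidAlgebra.singleZeroRingHom_apply] using hs a b
  rcases lt_trichotomy i j with h | h | h
  · exact absurd (main_lt hidem k c hmono hprime hker i j h (conv i hi) (conv j hj)) not_false
  · exact h
  · exact absurd (main_lt hidem k c hmono hprime hker j i h (conv j hj) (conv i hi)) not_false
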